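/- Let k ≥ 1 and let A and S be real skew-symmetric (2k+1)×(2k+1) matrices. Then A and S are SO(2k+1)-conjugate if and only if A and S have the same characteristic polynomial. -/

import Mathlib

open Matrix Polynomial Finset

variable {n : Type*} [Fintype n] [DecidableEq n] {R : Type*} [CommRing R]

lemma my_charpoly_conj (U V A : Matrix n n R) (hUV : U * V = 1) (hVU : V * U = 1) :
    (U * A * V).charpoly = A.charpoly := by
  have key : charmatrix (U * A * V) = U.map C * charmatrix A * V.map C := by
    unfold charmatrix
    have h1 : U.map C * ((scalar n) X - C.mapMatrix A) * V.map C
        = U.map C * scalar n X * V.map C - C.mapMatrix (U * A * V) := by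
      rw [Matrix.mul_sub, Matrix.sub_mul]
      congr 1
      simp [RingHom.mapMatrix_apply, Matrix.map_mul, Matrix.mul_assoc]
    have h2 : U.map C * scalar n X * V.map C = scalar n X := by
      rw [← (scalar_commute X (Commute.all X) (U.map C)).eq, Matrix.mul_assoc, ← Matrix.map_mul,
        hUV, Matrix.map_one _ (map_zero _) (map_one _), Matrix.mul_one]
    rw [h1, h2]
  rw [Matrix.charpoly, key, det_mul, det_mul, mul_comm, ← mul_assoc, ← det_mul,
    ← Matrix.map_mul, hVU, Matrix.map_one _ (map_zero _) (map_one _), det_one, one_mul]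
  rfl

variable {n : Type*} [Fintype n] [DecidableEq n] {R : Type*} [CommRing R]

lemma my_charpoly_diagonal (d : n → R) :
    (diagonal d).charpoly = ∏ i, (X - C (d i)) := by
  have : charmatrix (diagonal d) = diagonal fun i => X - C (d i) := by
    ext i j
    by_cases h : i = j
    · subst h; simp [charmatrix_apply_eq, diagonal_apply_eq]
    · simp [charmatrix_apply_ne _ _ _ h, diagonal_apply_ne _ h]
  rw [Matrix.charpoly, this, det_diagonal]

lemma multiset_map_comp_perm {m : ℕ} (u : Fin m → ℝ) (σ : Equiv.Perm (Fin m)) :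
    Finset.univ.val.map (u ∘ σ) = Finset.univ.val.map u := by
  have h1 : Finset.univ.val.map ⇑σ = Finset.univ.val := by
    conv_rhs => rw [← Finset.map_univ_equiv σ]
    rw [Finset.map_val]
    rfl
  conv_rhs => rw [← h1]
  rw [Multiset.map_map]

lemma exists_perm_of_multiset_eq {m : ℕ} (f g : Fin m → ℝ)
    (h : Finset.univ.val.map f = Finset.univ.val.map g) :
    ∃ σ : Equiv.Perm (Fin m), f ∘ σ = g := by
  have hf : Monotone (f ∘ Tuple.sort f) := Tuple.monotone_sort f
  have hg : Monotone (g ∘ Tuple.sort g) := Tuple.monotone_sort g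
  have heq : f ∘ Tuple.sort f = g ∘ Tuple.sort g := by
    have hm : Finset.univ.val.map (f ∘ Tuple.sort f) = Finset.univ.val.map (g ∘ Tuple.sort g) := by
      rw [multiset_map_comp_perm, multiset_map_comp_perm, h]
    have hl : List.ofFn (f ∘ Tuple.sort f) = List.ofFn (g ∘ Tuple.sort g) := by
      apply List.Perm.eq_of_sortedLE hf.sortedLE_ofFn hg.sortedLE_ofFn
      have key : ∀ h : Fin m → ℝ, (↑(List.ofFn h) : Multiset ℝ) = Finset.univ.val.map h := by
        intro h
        rw [List.ofFn_eq_map, Fin.univ_def]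
        rfl
      rw [← Multiset.coe_eq_coe, key, key, hm]
    exact List.ofFn_injective hl
  refine ⟨(Tuple.sort g).symm.trans (Tuple.sort f), ?_⟩
  funext i
  have := congrFun heq ((Tuple.sort g).symm i)
  simpa using this

lemma sqrt_commute {m : ℕ} (P A : Matrix (Fin m) (Fin m) ℝ) (hP : P.PosSemidef)
    (hcomm : A * P = P * A) :
    ∃ K : Matrix (Fin m) (Fin m) ℝ, Kᵀ = K ∧ K * K = P ∧ A * K = K * A := by
  have hH : P.IsHermitian := hP.1
  set U : Matrix (Fin m) (Fin m) ℝ := (hH.eigenvectorUnitary : Matrix (Fin m) (Fin m) ℝ) with hU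
  set d : Fin m → ℝ := hH.eigenvalues with hd
  have hUU : U * star U = 1 := (Matrix.mem_unitaryGroup_iff).mp hH.eigenvectorUnitary.2
  have hUU' : star U * U = 1 := (Matrix.mem_unitaryGroup_iff').mp hH.eigenvectorUnitary.2
  have cancel1 : ∀ X : Matrix (Fin m) (Fin m) ℝ, X * star U * U = X := fun X => by
    rw [Matrix.mul_assoc, hUU', Matrix.mul_one]
  have cancel2 : ∀ X : Matrix (Fin m) (Fin m) ℝ, X * U * star U = X := fun X => by
    rw [Matrix.mul_assoc, hUU, Matrix.mul_one]
  have hspec : P = U * diagonal d * star U := by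
    have := hH.spectral_theorem
    simpa using this
  set Ds : Matrix (Fin m) (Fin m) ℝ := diagonal (fun i => Real.sqrt (d i)) with hDs
  set K : Matrix (Fin m) (Fin m) ℝ := U * Ds * star U with hK
  refine ⟨K, ?_, ?_, ?_⟩
  · have : star K = K := by
      rw [hK, StarMul.star_mul, StarMul.star_mul, star_star]
      have hDstar : star Ds = Ds := by
        rw [hDs, Matrix.star_eq_conjTranspose, Matrix.diagonal_conjTranspose]
        congr 1
      rw [hDstar, Matrix.mul_assoc]
    rw [← Matrix.conjTranspose_eq_transpose_of_trivial, ← Matrix.star_eq_conjTranspose]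
    exact this
  · rw [hK, hspec]
    simp only [← Matrix.mul_assoc]
    rw [cancel1]
    have he : (fun i => Real.sqrt (d i) * Real.sqrt (d i)) = d :=
      funext fun i => Real.mul_self_sqrt (hP.eigenvalues_nonneg i)
    rw [Matrix.mul_assoc U Ds Ds, hDs, Matrix.diagonal_mul_diagonal, he]
  · set A' : Matrix (Fin m) (Fin m) ℝ := star U * A * U with hA'
    have hAU : A = U * A' * star U := by
      rw [hA']
      simp only [← Matrix.mul_assoc]
      rw [hUU, Matrix.one_mul, cancel2]
    have hcomm' : A' * diagonal d = diagonal d * A' := by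
      have h1 : A * (U * diagonal d * star U) = (U * diagonal d * star U) * A := by
        rw [← hspec]; exact hcomm
      have h2 := congrArg (fun X => star U * X * U) h1
      simp only [← Matrix.mul_assoc] at h2 ⊢
      rw [cancel1, hUU', Matrix.one_mul] at h2
      simp only [hA', ← Matrix.mul_assoc] at h2 ⊢
      exact h2
    have key : A' * Ds = Ds * A' := by
      ext i j
      rw [hDs, Matrix.mul_diagonal, Matrix.diagonal_mul]
      have hij : A' i j * d j = d i * A' i j := by
        have := congrFun (congrFun hcomm' i) j
        simpa [Matrix.mul_diagonal, Matrix.diagonal_mul] using this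
      by_cases h0 : A' i j = 0
      · simp [h0]
      · have hdd : d j = d i := by
          rw [mul_comm (d i) _] at hij
          exact mul_left_cancel₀ h0 hij
        rw [hdd, mul_comm]
    conv_lhs => rw [hAU]
    conv_rhs => rw [hAU]
    rw [hK]
    simp only [← Matrix.mul_assoc]
    rw [cancel1, cancel1, Matrix.mul_assoc U A', key]
    simp only [Matrix.mul_assoc]

noncomputable section

lemma skew_diag {m : ℕ} (A : Matrix (Fin m) (Fin m) ℝ) (hA : Aᵀ = -A) :
    ∃ (U : Matrix (Fin m) (Fin m) ℂ) (d : Fin m → ℝ), U * star U = 1 ∧ star U * U = 1 ∧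
      A.map (algebraMap ℝ ℂ) = U * diagonal (fun i => -Complex.I * d i) * star U := by
  set A' : Matrix (Fin m) (Fin m) ℂ := A.map (algebraMap ℝ ℂ) with hA'
  have hherm : (Complex.I • A').IsHermitian := by
    rw [Matrix.IsHermitian, Matrix.conjTranspose_smul]
    have h1 : A'ᴴ = -A' := by
      ext i j
      simp [hA', Matrix.conjTranspose_apply, Matrix.map_apply]
      have := congrFun (congrFun hA i) j
      simp [Matrix.transpose_apply, Matrix.neg_apply] at this
      simp [this]
    rw [h1]
    simp [Complex.star_def, Complex.conj_I]
  refine ⟨hherm.eigenvectorUnitary, hherm.eigenvalues,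
    (Matrix.mem_unitaryGroup_iff).mp hherm.eigenvectorUnitary.2,
    (Matrix.mem_unitaryGroup_iff').mp hherm.eigenvectorUnitary.2, ?_⟩
  have hspec := hherm.spectral_theorem
  simp only [Unitary.conjStarAlgAut_apply, Unitary.coe_star] at hspec
  calc A' = (-Complex.I) • (hherm.eigenvectorUnitary : Matrix (Fin m) (Fin m) ℂ)
        * diagonal (RCLike.ofReal ∘ hherm.eigenvalues)
        * star (hherm.eigenvectorUnitary : Matrix (Fin m) (Fin m) ℂ) := by
        rw [Matrix.smul_mul, Matrix.smul_mul, ← hspec, smul_smul]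
        simp
    _ = (hherm.eigenvectorUnitary : Matrix (Fin m) (Fin m) ℂ)
        * diagonal (fun i => -Complex.I * hherm.eigenvalues i)
        * star (hherm.eigenvectorUnitary : Matrix (Fin m) (Fin m) ℂ) := by
        rw [Matrix.smul_mul, ← Matrix.mul_smul]
        congr 2
        ext a b
        by_cases hab : a = b
        · subst hab; simp [Matrix.smul_apply]
        · simp [Matrix.smul_apply, Matrix.diagonal_apply_ne _ hab]

lemma exists_complex_similar {m : ℕ} (A S : Matrix (Fin m) (Fin m) ℝ)
    (hA : Aᵀ = -A) (hS : Sᵀ = -S) (h : A.charpoly = S.charpoly) :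
    ∃ M : Matrix (Fin m) (Fin m) ℂ, IsUnit M.det ∧
      M * A.map (algebraMap ℝ ℂ) = S.map (algebraMap ℝ ℂ) * M := by
  obtain ⟨U₁, d₁, hU₁, hU₁', hA1⟩ := skew_diag A hA
  obtain ⟨U₂, d₂, hU₂, hU₂', hS1⟩ := skew_diag S hS
  -- charpoly computations
  have hcp : ∀ (B : Matrix (Fin m) (Fin m) ℝ) (U : Matrix (Fin m) (Fin m) ℂ) (d : Fin m → ℝ),
      U * star U = 1 → star U * U = 1 →
      B.map (algebraMap ℝ ℂ) = U * diagonal (fun i => -Complex.I * d i) * star U →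
      (B.charpoly).map (algebraMap ℝ ℂ) = ∏ i, (X - C (-Complex.I * d i)) := by
    intro B U d h1 h2 h3
    rw [← Matrix.charpoly_map, h3, my_charpoly_conj (U) (star U) _ h1 h2, my_charpoly_diagonal]
  have e1 := hcp A U₁ d₁ hU₁ hU₁' hA1
  have e2 := hcp S U₂ d₂ hU₂ hU₂' hS1
  rw [h, e2] at e1
  -- multiset of roots
  have hroots : ∀ d : Fin m → ℝ, (∏ i, (X - C (-Complex.I * d i))).roots
      = Finset.univ.val.map (fun i => -Complex.I * d i) := by
    intro d
    rw [Finset.prod_eq_multiset_prod]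
    have h0 : Finset.univ.val.map (fun i => X - C (-Complex.I * (d i : ℂ)))
        = (Finset.univ.val.map (fun i => -Complex.I * (d i : ℂ))).map (fun a => X - C a) := by
      rw [Multiset.map_map]
      rfl
    rw [h0, roots_multiset_prod_X_sub_C]
  have hms : Finset.univ.val.map (fun i => -Complex.I * d₁ i)
      = Finset.univ.val.map (fun i => -Complex.I * d₂ i) := by
    rw [← hroots, ← hroots, e1.symm]
  have hinj : Function.Injective (fun x : ℝ => -Complex.I * (x : ℂ)) := by
    intro x y hxy
    simp only [neg_mul, neg_inj, mul_right_inj' Complex.I_ne_zero] at hxy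
    exact_mod_cast hxy
  have hms' : Finset.univ.val.map d₁ = Finset.univ.val.map d₂ := by
    apply Multiset.map_injective hinj
    simpa [Multiset.map_map, Function.comp_def] using hms
  obtain ⟨σ, hσ⟩ := exists_perm_of_multiset_eq d₁ d₂ hms'
  -- permutation matrix
  set Pm : Matrix (Fin m) (Fin m) ℂ := Matrix.of (fun i j => if j = σ i then 1 else 0) with hPm
  set Qm : Matrix (Fin m) (Fin m) ℂ := Matrix.of (fun i j => if i = σ j then 1 else 0) with hQm
  have hPQ : Pm * Qm = 1 := by
    ext i j
    rw [Matrix.mul_apply]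
    simp only [hPm, hQm, Matrix.of_apply, Matrix.one_apply]
    simp [σ.injective.eq_iff, eq_comm]
  have hQP : Qm * Pm = 1 := by
    ext i j
    rw [Matrix.mul_apply]
    simp only [hPm, hQm, Matrix.of_apply]
    rw [
      Fintype.sum_equiv σ _ (fun x => (if i = x then (1:ℂ) else 0) * (if j = x then 1 else 0))
        (fun k => rfl)]
    simp [Matrix.one_apply, eq_comm]
  have hPD : Pm * diagonal (fun i => -Complex.I * d₁ i)
      = diagonal (fun i => -Complex.I * d₂ i) * Pm := by
    ext i j
    rw [Matrix.mul_diagonal, Matrix.diagonal_mul]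
    simp only [hPm, Matrix.of_apply]
    by_cases hij : j = σ i
    · subst hij
      have : d₁ (σ i) = d₂ i := congrFun hσ i
      simp [this, mul_comm]
    · simp [hij]
  -- assemble M
  refine ⟨U₂ * Pm * star U₁, ?_, ?_⟩
  · rw [Matrix.det_mul, Matrix.det_mul]
    apply IsUnit.mul
    apply IsUnit.mul
    · exact Matrix.isUnit_det_of_right_inverse hU₂
    · exact Matrix.isUnit_det_of_right_inverse hPQ
    · exact Matrix.isUnit_det_of_left_inverse hU₁
  · rw [hA1, hS1]
    have cancelA : ∀ X : Matrix (Fin m) (Fin m) ℂ, X * star U₁ * U₁ = X := fun X => by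
      rw [Matrix.mul_assoc, hU₁', Matrix.mul_one]
    have cancelS : ∀ X : Matrix (Fin m) (Fin m) ℂ, X * star U₂ * U₂ = X := fun X => by
      rw [Matrix.mul_assoc, hU₂', Matrix.mul_one]
    simp only [← Matrix.mul_assoc]
    rw [cancelA, cancelS, Matrix.mul_assoc U₂ Pm, hPD, ← Matrix.mul_assoc]

lemma exists_real_similar {m : ℕ} (A S : Matrix (Fin m) (Fin m) ℝ)
    (M : Matrix (Fin m) (Fin m) ℂ) (hdet : IsUnit M.det)
    (hMA : M * A.map (algebraMap ℝ ℂ) = S.map (algebraMap ℝ ℂ) * M) :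
    ∃ T : Matrix (Fin m) (Fin m) ℝ, IsUnit T.det ∧ T * A = S * T := by
  set Pr : Matrix (Fin m) (Fin m) ℝ := M.map Complex.re with hPr
  set Qr : Matrix (Fin m) (Fin m) ℝ := M.map Complex.im with hQr
  have hPA : Pr * A = S * Pr := by
    ext i j
    have h0 := congrArg Complex.re (congrFun (congrFun hMA i) j)
    simp only [Matrix.mul_apply, Matrix.map_apply, Complex.re_sum, Complex.mul_re,
      Complex.ofReal_re, Complex.ofReal_im, mul_zero, zero_mul, sub_zero,
      Complex.coe_algebraMap] at h0 ⊢
    simpa [hPr] using h0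
  have hQA : Qr * A = S * Qr := by
    ext i j
    have h0 := congrArg Complex.im (congrFun (congrFun hMA i) j)
    simp only [Matrix.mul_apply, Matrix.map_apply, Complex.im_sum, Complex.mul_im,
      Complex.ofReal_re, Complex.ofReal_im, mul_zero, zero_mul, add_zero, zero_add,
      Complex.coe_algebraMap] at h0 ⊢
    simpa [hQr] using h0
  -- polynomial determinant trick
  set N : Matrix (Fin m) (Fin m) ℝ[X] := Matrix.of (fun i j => C (Pr i j) + C (Qr i j) * X)
    with hN
  have hψ : N.map (eval₂ (algebraMap ℝ ℂ) Complex.I) = M := by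
    ext i j
    simp [hN, Matrix.map_apply, eval₂_add, eval₂_mul, eval₂_C, eval₂_X, hPr, hQr,
      Complex.coe_algebraMap, Complex.re_add_im]
  have hNdet : N.det ≠ 0 := by
    intro hc
    have : M.det = 0 := by
      rw [← hψ]
      have := RingHom.map_det (eval₂RingHom (algebraMap ℝ ℂ) Complex.I) N
      simp only [RingHom.mapMatrix_apply, coe_eval₂RingHom] at this
      rw [← this, hc, eval₂_zero]
    exact hdet.ne_zero this
  obtain ⟨t, ht⟩ : ∃ t : ℝ, eval t N.det ≠ 0 := by
    by_contra hc
    push_neg at hc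
    exact hNdet (Polynomial.zero_of_eval_zero _ hc)
  refine ⟨Pr + t • Qr, ?_, ?_⟩
  · have h2 := RingHom.map_det (evalRingHom t) N
    simp only [RingHom.mapMatrix_apply, coe_evalRingHom] at h2
    have : (Pr + t • Qr).det = eval t N.det := by
      rw [h2]
      congr 1
      ext i j
      simp [hN, Matrix.map_apply]
      ring
    rw [isUnit_iff_ne_zero, this]
    exact ht
  · rw [Matrix.add_mul, Matrix.mul_add, Matrix.smul_mul, Matrix.mul_smul, hPA, hQA]
lemma orth_of_real_similar {m : ℕ} (A S : Matrix (Fin m) (Fin m) ℝ)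
    (hA : Aᵀ = -A) (hS : Sᵀ = -S) (T : Matrix (Fin m) (Fin m) ℝ)
    (hT : IsUnit T.det) (hTA : T * A = S * T) :
    ∃ O : Matrix (Fin m) (Fin m) ℝ, Oᵀ * O = 1 ∧ O * A * O⁻¹ = S := by
  have hATt : A * Tᵀ = Tᵀ * S := by
    have h0 := congrArg Matrix.transpose hTA
    rw [Matrix.transpose_mul, Matrix.transpose_mul, hA, hS] at h0
    simp only [Matrix.neg_mul, Matrix.mul_neg, neg_inj] at h0
    exact h0
  have hcomm : A * (Tᵀ * T) = (Tᵀ * T) * A := by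
    calc A * (Tᵀ * T) = (A * Tᵀ) * T := (Matrix.mul_assoc _ _ _).symm
      _ = Tᵀ * S * T := by rw [hATt]
      _ = Tᵀ * (S * T) := Matrix.mul_assoc _ _ _
      _ = Tᵀ * (T * A) := by rw [← hTA]
      _ = Tᵀ * T * A := (Matrix.mul_assoc _ _ _).symm
  have hP : (Tᵀ * T).PosSemidef := by
    have := Matrix.posSemidef_conjTranspose_mul_self T
    rwa [Matrix.conjTranspose_eq_transpose_of_trivial] at this
  obtain ⟨K, hKsym, hKK, hKA⟩ := sqrt_commute (Tᵀ * T) A hP hcomm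
  have hKdet : IsUnit K.det := by
    have h1 : K.det * K.det = T.det * T.det := by
      have := congrArg Matrix.det hKK
      rwa [Matrix.det_mul, Matrix.det_mul, Matrix.det_transpose] at this
    have h2 : IsUnit (K.det * K.det) := h1 ▸ hT.mul hT
    exact isUnit_of_mul_isUnit_left h2
  have hKinv : K⁻¹ * K = 1 := Matrix.nonsing_inv_mul K hKdet
  have hKinv' : K * K⁻¹ = 1 := Matrix.mul_nonsing_inv K hKdet
  have hTinv' : T * T⁻¹ = 1 := Matrix.mul_nonsing_inv T hT
  have hKAinv : K⁻¹ * A = A * K⁻¹ := by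
    calc K⁻¹ * A = K⁻¹ * A * (K * K⁻¹) := by rw [hKinv', Matrix.mul_one]
      _ = K⁻¹ * (A * K) * K⁻¹ := by simp only [Matrix.mul_assoc]
      _ = K⁻¹ * (K * A) * K⁻¹ := by rw [hKA]
      _ = A * K⁻¹ := by rw [← Matrix.mul_assoc, hKinv, Matrix.one_mul]
  refine ⟨T * K⁻¹, ?_, ?_⟩
  · have hKt : (K⁻¹)ᵀ = K⁻¹ := by rw [Matrix.transpose_nonsing_inv, hKsym]
    rw [Matrix.transpose_mul, hKt]
    calc K⁻¹ * Tᵀ * (T * K⁻¹) = K⁻¹ * (Tᵀ * T) * K⁻¹ := by simp only [Matrix.mul_assoc]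
      _ = K⁻¹ * (K * K) * K⁻¹ := by rw [hKK]
      _ = 1 := by rw [← Matrix.mul_assoc, hKinv, Matrix.one_mul, hKinv']
  · have hOinv : (T * K⁻¹)⁻¹ = K * T⁻¹ := by
      apply Matrix.inv_eq_right_inv
      calc T * K⁻¹ * (K * T⁻¹) = T * (K⁻¹ * K) * T⁻¹ := by simp only [Matrix.mul_assoc]
        _ = 1 := by rw [hKinv, Matrix.mul_one, hTinv']
    rw [hOinv]
    calc T * K⁻¹ * A * (K * T⁻¹) = T * (K⁻¹ * A * K) * T⁻¹ := by simp only [Matrix.mul_assoc]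
      _ = T * (A * (K⁻¹ * K)) * T⁻¹ := by rw [hKAinv]; simp only [Matrix.mul_assoc]
      _ = T * A * T⁻¹ := by rw [hKinv, Matrix.mul_one]
      _ = S * (T * T⁻¹) := by rw [hTA]; simp only [Matrix.mul_assoc]
      _ = S := by rw [hTinv', Matrix.mul_one]
/-- `X` and `Y` are conjugate by a special orthogonal matrix:
there is `B` with `BᵀB = 1`, `det B = 1` and `B X B⁻¹ = Y`. -/
def SOConj {m : ℕ} (X Y : Matrix (Fin m) (Fin m) ℝ) : Prop :=
  ∃ B : Matrix (Fin m) (Fin m) ℝ, Bᵀ * B = 1 ∧ B.det = 1 ∧ B * X * B⁻¹ = Y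

/-- Two real skew-symmetric matrices of odd size `2k+1` are SO(2k+1)-conjugate
if and only if they have the same characteristic polynomial. -/
theorem statement7 (k : ℕ) (hk : 1 ≤ k) (A S : Matrix (Fin (2*k+1)) (Fin (2*k+1)) ℝ)
    (hA : Aᵀ = -A) (hS : Sᵀ = -S) :
    SOConj A S ↔ A.charpoly = S.charpoly := by
  constructor
  · rintro ⟨B, hBtB, hBdet, hBAB⟩
    have hBB : B * Bᵀ = 1 := mul_eq_one_comm.mp hBtB
    have hBinv : B⁻¹ = Bᵀ := Matrix.inv_eq_right_inv hBB
    rw [← hBAB, hBinv]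
    exact (my_charpoly_conj B Bᵀ A hBB hBtB).symm
  · intro h
    obtain ⟨M, hMdet, hMA⟩ := exists_complex_similar A S hA hS h
    obtain ⟨T, hT, hTA⟩ := exists_real_similar A S M hMdet hMA
    obtain ⟨O, hOtO, hOAO⟩ := orth_of_real_similar A S hA hS T hT hTA
    have hOO : O * Oᵀ = 1 := mul_eq_one_comm.mp hOtO
    have hOdet : O.det * O.det = 1 := by
      have := congrArg Matrix.det hOtO
      rwa [Matrix.det_mul, Matrix.det_transpose, Matrix.det_one] at this
    have hOunit : IsUnit O.det := IsUnit.of_mul_eq_one _ hOdet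
    rcases mul_self_eq_one_iff.mp hOdet with h1 | h1
    · exact ⟨O, hOtO, h1, hOAO⟩
    · refine ⟨-O, ?_, ?_, ?_⟩
      · rw [Matrix.transpose_neg, Matrix.neg_mul, Matrix.mul_neg, neg_neg, hOtO]
      · rw [Matrix.det_neg, h1, Fintype.card_fin]
        have : Odd (2 * k + 1) := odd_two_mul_add_one k
        rw [this.neg_one_pow]
        ring
      · have hOinv : (-O)⁻¹ = -O⁻¹ := by
          apply Matrix.inv_eq_right_inv
          rw [Matrix.neg_mul, Matrix.mul_neg, neg_neg, Matrix.mul_nonsing_inv O hOunit]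
        rw [hOinv, Matrix.neg_mul, Matrix.mul_neg, Matrix.neg_mul, neg_neg, hOAO]
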